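/- Set g(X,Y) = ∏_{i=1}^{q-1} F(X, ζ^i·Y). Then g(X,0) = X^{q-1}, and if in addition q is odd, then g(Y,X) = −g(X,Y). -/

import Mathlib

open Filter


/-- Total degree of a multi-index. -/
def mdeg {sig : Type*} (d : sig →₀ ℕ) : ℕ := d.sum fun _ e => e

/-- Substitution of a multivariable power series `G` with vanishing constant
term into a one-variable power series `f`, i.e. `f(G)`.  (For `G` with zero
constant term only finitely many terms contribute to each coefficient, and the
formula below computes the honest substitution.) -/
noncomputable def substPS {C : Type*} [CommRing C] {sig : Type*}
    (G : MvPowerSeries sig C) (f : PowerSeries C) : MvPowerSeries sig C :=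
  fun d => ∑ n ∈ Finset.range (mdeg d + 1),
    PowerSeries.coeff n f * MvPowerSeries.coeff d (G ^ n)

/-- Substitution of a one-variable power series into a one-variable power
series: `f(G)`. -/
noncomputable def substPS1 {C : Type*} [CommRing C]
    (G f : PowerSeries C) : PowerSeries C :=
  substPS (G : MvPowerSeries Unit C) f

/-- Substitution of the pair `(a, b)` (each with vanishing constant term) into
a two-variable power series `F`, i.e. `F(a, b)`. -/
noncomputable def subst2 {C : Type*} [CommRing C] {tau : Type*}
    (a b : MvPowerSeries tau C) (F : MvPowerSeries (Fin 2) C) : MvPowerSeries tau C :=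
  fun e => ∑ ij ∈ Finset.range (mdeg e + 1) ×ˢ Finset.range (mdeg e + 1),
    MvPowerSeries.coeff (Finsupp.single 0 ij.1 + Finsupp.single 1 ij.2) F *
      MvPowerSeries.coeff e (a ^ ij.1 * b ^ ij.2)

namespace Lubin

open MvPowerSeries Finset

/-- pairing of exponents into a `Fin 2 →₀ ℕ`. -/
noncomputable def s (i j : ℕ) : Fin 2 →₀ ℕ := Finsupp.single 0 i + Finsupp.single 1 j

@[simp] lemma s_apply0 (i j : ℕ) : s i j 0 = i := by
  simp [s, Finsupp.single_apply]

@[simp] lemma s_apply1 (i j : ℕ) : s i j 1 = j := by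
  simp [s, Finsupp.single_apply]

lemma s_eq_self (d : Fin 2 →₀ ℕ) : s (d 0) (d 1) = d := by
  ext x
  fin_cases x <;> simp

@[simp] lemma mdeg_zero : mdeg (0 : Fin 2 →₀ ℕ) = 0 := by simp [mdeg]

lemma mdeg_add {sig : Type*} (x y : sig →₀ ℕ) : mdeg (x + y) = mdeg x + mdeg y := by
  simpa [mdeg] using Finsupp.sum_add_index' (by simp) (by intro a b c; rfl)

lemma mdeg_single {sig : Type*} (x : sig) (n : ℕ) : mdeg (Finsupp.single x n) = n := by
  simp [mdeg, Finsupp.sum_single_index]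

lemma mdeg_s (i j : ℕ) : mdeg (s i j) = i + j := by
  simp [s, mdeg_add, mdeg_single]

lemma mdeg_eq_d0_add_d1 (d : Fin 2 →₀ ℕ) : mdeg d = d 0 + d 1 := by
  conv_lhs => rw [← s_eq_self d]
  rw [mdeg_s]

lemma eq_zero_of_mdeg_eq_zero {sig : Type*} {d : sig →₀ ℕ} (h : mdeg d = 0) : d = 0 := by
  ext x
  by_contra hx
  have hmem : x ∈ d.support := Finsupp.mem_support_iff.2 hx
  have := Finset.sum_eq_zero_iff.1 h x hmem
  exact hx this

lemma ge_apply_mdeg {sig : Type*} (d : sig →₀ ℕ) (x : sig) : d x ≤ mdeg d := by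
  by_cases hx : d x = 0
  · simp [hx]
  · exact Finset.single_le_sum (f := fun a => d a) (by intros; exact Nat.zero_le _)
      (Finsupp.mem_support_iff.2 hx)

end Lubin

namespace Lubin
open MvPowerSeries Finset

variable {R : Type*} [CommRing R] {tau : Type*}

/-- vanishing below a given order -/
def OrdGE (n : ℕ) (u : MvPowerSeries tau R) : Prop :=
  ∀ e : tau →₀ ℕ, mdeg e < n → MvPowerSeries.coeff e u = 0

lemma OrdGE.mul {m n : ℕ} {u v : MvPowerSeries tau R} (hu : OrdGE m u) (hv : OrdGE n v) :
    OrdGE (m + n) (u * v) := by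
  intro e he
  classical
  rw [MvPowerSeries.coeff_mul]
  refine Finset.sum_eq_zero fun p hp => ?_
  rw [Finset.HasAntidiagonal.mem_antidiagonal] at hp
  have : mdeg p.1 + mdeg p.2 = mdeg e := by rw [← mdeg_add, hp]
  rcases (by omega : mdeg p.1 < m ∨ mdeg p.2 < n) with h | h
  · rw [hu p.1 h, zero_mul]
  · rw [hv p.2 h, mul_zero]

lemma OrdGE.pow {u : MvPowerSeries tau R} (hu : OrdGE 1 u) (i : ℕ) : OrdGE i (u ^ i) := by
  induction i with
  | zero => intro e he; omega
  | succ k ih =>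
    rw [pow_succ]
    exact ih.mul hu

lemma ordGE_one {u : MvPowerSeries tau R} (hu : MvPowerSeries.constantCoeff (σ := tau) (R := R) u = 0) :
    OrdGE 1 u := by
  intro e he
  have : e = 0 := eq_zero_of_mdeg_eq_zero (by omega)
  rw [this, MvPowerSeries.coeff_zero_eq_constantCoeff_apply, hu]

lemma coeff_pow_mul_pow_eq_zero {a b : MvPowerSeries tau R}
    (ha : MvPowerSeries.constantCoeff (σ := tau) (R := R) a = 0)
    (hb : MvPowerSeries.constantCoeff (σ := tau) (R := R) b = 0)
    {i j : ℕ} {e : tau →₀ ℕ} (h : mdeg e < i + j) :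
    MvPowerSeries.coeff e (a ^ i * b ^ j) = 0 :=
  ((ordGE_one ha).pow i).mul ((ordGE_one hb).pow j) e h

end Lubin

namespace Lubin
open MvPowerSeries Finset

variable {R : Type*} [CommRing R] {tau : Type*}

/-- the polynomial-style truncated evaluation -/
noncomputable def Phi (a b : MvPowerSeries tau R) (N : ℕ) (F : MvPowerSeries (Fin 2) R) :
    MvPowerSeries tau R :=
  ∑ d ∈ Finset.Iic (s N N),
    MvPowerSeries.C (σ := tau) (R := R) (MvPowerSeries.coeff d F) * (a ^ (d 0) * b ^ (d 1))

lemma coeff_Phi (a b : MvPowerSeries tau R) (N : ℕ) (F : MvPowerSeries (Fin 2) R)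
    (e : tau →₀ ℕ) :
    MvPowerSeries.coeff e (Phi a b N F) =
      ∑ d ∈ Finset.Iic (s N N),
        MvPowerSeries.coeff d F * MvPowerSeries.coeff e (a ^ (d 0) * b ^ (d 1)) := by
  rw [Phi, map_sum]
  exact Finset.sum_congr rfl fun d _ => MvPowerSeries.coeff_C_mul _ _ _

lemma coeff_subst2 (a b : MvPowerSeries tau R) (F : MvPowerSeries (Fin 2) R) (e : tau →₀ ℕ) :
    MvPowerSeries.coeff e (subst2 a b F) =
      ∑ ij ∈ Finset.range (mdeg e + 1) ×ˢ Finset.range (mdeg e + 1),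
        MvPowerSeries.coeff (s ij.1 ij.2) F *
          MvPowerSeries.coeff e (a ^ ij.1 * b ^ ij.2) := rfl

lemma mem_Iic_s {i j N : ℕ} : s i j ∈ Finset.Iic (s N N) ↔ i ≤ N ∧ j ≤ N := by
  rw [Finset.mem_Iic]
  constructor
  · intro h
    exact ⟨by simpa using h 0, by simpa using h 1⟩
  · intro ⟨h1, h2⟩ x
    fin_cases x <;> simpa

/-- The key bridge: the coefficient of `subst2 a b F` agrees with that of any
sufficiently long truncated evaluation. -/
lemma coeff_subst2_eq_coeff_Phi {a b : MvPowerSeries tau R}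
    (ha : MvPowerSeries.constantCoeff (σ := tau) (R := R) a = 0)
    (hb : MvPowerSeries.constantCoeff (σ := tau) (R := R) b = 0)
    (F : MvPowerSeries (Fin 2) R) {e : tau →₀ ℕ} {N : ℕ} (hN : mdeg e ≤ N) :
    MvPowerSeries.coeff e (subst2 a b F) = MvPowerSeries.coeff e (Phi a b N F) := by
  rw [coeff_subst2, coeff_Phi]
  -- first extend the square sum to size N
  have step1 : ∑ ij ∈ Finset.range (mdeg e + 1) ×ˢ Finset.range (mdeg e + 1),
        MvPowerSeries.coeff (s ij.1 ij.2) F *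
          MvPowerSeries.coeff e (a ^ ij.1 * b ^ ij.2)
      = ∑ ij ∈ Finset.range (N + 1) ×ˢ Finset.range (N + 1),
        MvPowerSeries.coeff (s ij.1 ij.2) F *
          MvPowerSeries.coeff e (a ^ ij.1 * b ^ ij.2) := by
    refine Finset.sum_subset ?_ ?_
    · intro x hx
      simp only [Finset.mem_product, Finset.mem_range] at hx ⊢
      omega
    · intro x hx hx'
      simp only [Finset.mem_product, Finset.mem_range] at hx hx'
      have : mdeg e < x.1 + x.2 := by omega
      rw [coeff_pow_mul_pow_eq_zero ha hb this, mul_zero]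
  rw [step1]
  refine Finset.sum_nbij' (fun ij => s ij.1 ij.2) (fun d => (d 0, d 1)) ?_ ?_ ?_ ?_ ?_
  · intro x hx
    simp only [Finset.mem_product, Finset.mem_range] at hx
    rw [mem_Iic_s]; omega
  · intro d hd
    rw [Finset.mem_Iic] at hd
    simp only [Finset.mem_product, Finset.mem_range]
    constructor
    · have := hd 0; simpa using Nat.lt_succ_of_le (by simpa using this)
    · have := hd 1; simpa using Nat.lt_succ_of_le (by simpa using this)
  · intro x _; simp
  · intro d _; exact s_eq_self d
  · intro x _; simp

end Lubin

namespace Lubin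
open MvPowerSeries Finset

variable {R : Type*} [CommRing R] {tau : Type*}
variable {a b : MvPowerSeries tau R}

lemma constantCoeff_subst2 (a b : MvPowerSeries tau R) (F : MvPowerSeries (Fin 2) R) :
    MvPowerSeries.constantCoeff (σ := tau) (R := R) (subst2 a b F) =
      MvPowerSeries.constantCoeff (σ := (Fin 2)) (R := R) F := by
  classical
  have h0 : mdeg (0 : tau →₀ ℕ) = 0 := by simp [mdeg]
  rw [← MvPowerSeries.coeff_zero_eq_constantCoeff_apply, coeff_subst2, h0,
    ← MvPowerSeries.coeff_zero_eq_constantCoeff_apply]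
  rw [Finset.range_one, Finset.singleton_product_singleton, Finset.sum_singleton]
  simp [s, MvPowerSeries.coeff_zero_one]

lemma subst2_add (a b : MvPowerSeries tau R) (F G : MvPowerSeries (Fin 2) R) :
    subst2 a b (F + G) = subst2 a b F + subst2 a b G := by
  apply MvPowerSeries.ext; intro e
  rw [map_add, coeff_subst2, coeff_subst2, coeff_subst2, ← Finset.sum_add_distrib]
  exact Finset.sum_congr rfl fun ij _ => by rw [map_add, add_mul]

lemma subst2_C (ha : MvPowerSeries.constantCoeff (σ := tau) (R := R) a = 0)
    (hb : MvPowerSeries.constantCoeff (σ := tau) (R := R) b = 0) (r : R) :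
    subst2 a b (MvPowerSeries.C (σ := (Fin 2)) (R := R) r) = MvPowerSeries.C (σ := tau) (R := R) r := by
  classical
  apply MvPowerSeries.ext; intro e
  rw [coeff_subst2_eq_coeff_Phi ha hb _ (le_refl (mdeg e)), coeff_Phi]
  rw [Finset.sum_eq_single (0 : Fin 2 →₀ ℕ)]
  · simp [MvPowerSeries.coeff_C, MvPowerSeries.coeff_one]
  · intro d _ hd
    rw [MvPowerSeries.coeff_C, if_neg hd, zero_mul]
  · intro h
    exact absurd (Finset.mem_Iic.2 (by intro x; simp)) h

lemma subst2_one (ha : MvPowerSeries.constantCoeff (σ := tau) (R := R) a = 0)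
    (hb : MvPowerSeries.constantCoeff (σ := tau) (R := R) b = 0) :
    subst2 a b (1 : MvPowerSeries (Fin 2) R) = 1 := by
  have := subst2_C (R := R) ha hb 1
  rwa [map_one, map_one] at this

lemma subst2_X0 (ha : MvPowerSeries.constantCoeff (σ := tau) (R := R) a = 0)
    (hb : MvPowerSeries.constantCoeff (σ := tau) (R := R) b = 0) :
    subst2 a b (MvPowerSeries.X 0 : MvPowerSeries (Fin 2) R) = a := by
  classical
  apply MvPowerSeries.ext; intro e
  rw [coeff_subst2_eq_coeff_Phi ha hb _ (Nat.le_succ_of_le (le_refl (mdeg e))), coeff_Phi]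
  rw [Finset.sum_eq_single (Finsupp.single (0 : Fin 2) 1)]
  · rw [MvPowerSeries.coeff_X, if_pos rfl]
    simp [Finsupp.single_apply]
  · intro d _ hd
    rw [MvPowerSeries.coeff_X, if_neg hd, zero_mul]
  · intro h
    refine absurd (Finset.mem_Iic.2 ?_) h
    intro x
    fin_cases x <;> simp [Finsupp.single_apply]

lemma subst2_X1 (ha : MvPowerSeries.constantCoeff (σ := tau) (R := R) a = 0)
    (hb : MvPowerSeries.constantCoeff (σ := tau) (R := R) b = 0) :
    subst2 a b (MvPowerSeries.X 1 : MvPowerSeries (Fin 2) R) = b := by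
  classical
  apply MvPowerSeries.ext; intro e
  rw [coeff_subst2_eq_coeff_Phi ha hb _ (Nat.le_succ_of_le (le_refl (mdeg e))), coeff_Phi]
  rw [Finset.sum_eq_single (Finsupp.single (1 : Fin 2) 1)]
  · rw [MvPowerSeries.coeff_X, if_pos rfl]
    simp [Finsupp.single_apply]
  · intro d _ hd
    rw [MvPowerSeries.coeff_X, if_neg hd, zero_mul]
  · intro h
    refine absurd (Finset.mem_Iic.2 ?_) h
    intro x
    fin_cases x <;> simp [Finsupp.single_apply]

end Lubin

namespace Lubin
open MvPowerSeries Finset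

variable {R : Type*} [CommRing R] {tau : Type*}
variable {a b : MvPowerSeries tau R}

private lemma termMul (a b : MvPowerSeries tau R) (x y : R) (i j k l : ℕ) :
    (MvPowerSeries.C (σ := tau) (R := R) x * (a ^ i * b ^ j)) *
      (MvPowerSeries.C (σ := tau) (R := R) y * (a ^ k * b ^ l))
      = MvPowerSeries.C (σ := tau) (R := R) (x * y) * (a ^ (i + k) * b ^ (j + l)) := by
  rw [map_mul, pow_add, pow_add]; ring

lemma subst2_mul (ha : MvPowerSeries.constantCoeff (σ := tau) (R := R) a = 0)
    (hb : MvPowerSeries.constantCoeff (σ := tau) (R := R) b = 0) (F G : MvPowerSeries (Fin 2) R) :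
    subst2 a b (F * G) = subst2 a b F * subst2 a b G := by
  classical
  apply MvPowerSeries.ext; intro e
  set M := mdeg e with hM
  have h2 : MvPowerSeries.coeff e (subst2 a b F * subst2 a b G)
      = MvPowerSeries.coeff e (Phi a b M F * Phi a b M G) := by
    rw [MvPowerSeries.coeff_mul, MvPowerSeries.coeff_mul]
    refine Finset.sum_congr rfl fun p hp => ?_
    rw [Finset.HasAntidiagonal.mem_antidiagonal] at hp
    have hmd : mdeg p.1 + mdeg p.2 = M := by rw [← mdeg_add, hp]
    rw [coeff_subst2_eq_coeff_Phi ha hb F (by omega : mdeg p.1 ≤ M),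
      coeff_subst2_eq_coeff_Phi ha hb G (by omega : mdeg p.2 ≤ M)]
  rw [coeff_subst2_eq_coeff_Phi ha hb (F * G) (le_refl M), h2]
  -- series-level rewriting of both sides as sums over pairs
  set T : (Fin 2 →₀ ℕ) × (Fin 2 →₀ ℕ) → MvPowerSeries tau R := fun p =>
    MvPowerSeries.C (σ := tau) (R := R) (MvPowerSeries.coeff p.1 F * MvPowerSeries.coeff p.2 G) *
      (a ^ ((p.1 + p.2) 0) * b ^ ((p.1 + p.2) 1)) with hT
  have hdisj : (↑(Finset.Iic (s M M)) : Set (Fin 2 →₀ ℕ)).PairwiseDisjoint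
      (fun d => Finset.HasAntidiagonal.antidiagonal d) := by
    intro d1 _ d2 _ hne
    refine Finset.disjoint_left.2 fun p h1 h2 => hne ?_
    rw [Finset.HasAntidiagonal.mem_antidiagonal] at h1 h2
    rw [← h1, ← h2]
  have hL : Phi a b M (F * G) =
      ∑ p ∈ (Finset.Iic (s M M)).biUnion (fun d => Finset.HasAntidiagonal.antidiagonal d), T p := by
    rw [Finset.sum_biUnion hdisj, Phi]
    refine Finset.sum_congr rfl fun d _ => ?_
    rw [MvPowerSeries.coeff_mul, map_sum, Finset.sum_mul]
    refine Finset.sum_congr rfl fun p hp => ?_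
    rw [Finset.HasAntidiagonal.mem_antidiagonal] at hp
    rw [hT]; simp only [hp]
  have hR : Phi a b M F * Phi a b M G =
      ∑ p ∈ Finset.Iic (s M M) ×ˢ Finset.Iic (s M M), T p := by
    rw [Phi, Phi, Finset.sum_mul_sum, ← Finset.sum_product']
    refine Finset.sum_congr rfl fun p _ => ?_
    rw [hT, termMul]
    simp [Finsupp.add_apply]
  rw [hL, hR, map_sum, map_sum]
  refine Finset.sum_subset ?_ ?_
  · intro p hp
    rw [Finset.mem_biUnion] at hp
    obtain ⟨d, hd, hpd⟩ := hp
    rw [Finset.HasAntidiagonal.mem_antidiagonal] at hpd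
    rw [Finset.mem_Iic] at hd
    rw [Finset.mem_product, Finset.mem_Iic, Finset.mem_Iic]
    constructor
    · exact le_trans (by rw [← hpd]; exact le_add_self.trans_eq (add_comm _ _) ) hd
    · exact le_trans (by rw [← hpd]; exact le_add_self) hd
  · intro p hp hnp
    have hnle : ¬ (p.1 + p.2 ≤ s M M) := by
      intro hle
      exact hnp (Finset.mem_biUnion.2 ⟨p.1 + p.2, Finset.mem_Iic.2 hle,
        Finset.HasAntidiagonal.mem_antidiagonal.2 rfl⟩)
    have hx : ∃ x : Fin 2, M < (p.1 + p.2) x := by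
      by_contra hc
      push_neg at hc
      exact hnle fun x => by
        have := hc x
        fin_cases x <;> simpa using this
    obtain ⟨x, hxlt⟩ := hx
    have hbig : M < (p.1 + p.2) 0 + (p.1 + p.2) 1 := by
      have h := ge_apply_mdeg (p.1 + p.2) x
      rw [mdeg_eq_d0_add_d1] at h
      omega
    rw [hT]
    simp only
    rw [MvPowerSeries.coeff_C_mul,
      coeff_pow_mul_pow_eq_zero ha hb (by omega : mdeg e < (p.1+p.2) 0 + (p.1+p.2) 1), mul_zero]

lemma subst2_pow (ha : MvPowerSeries.constantCoeff (σ := tau) (R := R) a = 0)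
    (hb : MvPowerSeries.constantCoeff (σ := tau) (R := R) b = 0) (F : MvPowerSeries (Fin 2) R) (n : ℕ) :
    subst2 a b (F ^ n) = (subst2 a b F) ^ n := by
  induction n with
  | zero => simpa using subst2_one ha hb
  | succ k ih => rw [pow_succ, pow_succ, subst2_mul ha hb, ih]

end Lubin

namespace Lubin
open MvPowerSeries Finset

variable {R : Type*} [CommRing R] {tau : Type*}
variable {a b : MvPowerSeries tau R} {u v : MvPowerSeries (Fin 2) R}

lemma subst2_comp (ha : MvPowerSeries.constantCoeff (σ := tau) (R := R) a = 0)
    (hb : MvPowerSeries.constantCoeff (σ := tau) (R := R) b = 0)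
    (hu : MvPowerSeries.constantCoeff (σ := (Fin 2)) (R := R) u = 0)
    (hv : MvPowerSeries.constantCoeff (σ := (Fin 2)) (R := R) v = 0)
    (F : MvPowerSeries (Fin 2) R) :
    subst2 a b (subst2 u v F) = subst2 (subst2 a b u) (subst2 a b v) F := by
  classical
  have hA : MvPowerSeries.constantCoeff (σ := tau) (R := R) (subst2 a b u) = 0 := by
    rw [constantCoeff_subst2, hu]
  have hB : MvPowerSeries.constantCoeff (σ := tau) (R := R) (subst2 a b v) = 0 := by
    rw [constantCoeff_subst2, hv]
  apply MvPowerSeries.ext; intro e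
  set M := mdeg e with hM
  have hRHS : MvPowerSeries.coeff e (subst2 (subst2 a b u) (subst2 a b v) F)
      = ∑ c ∈ Finset.Iic (s (2*M) (2*M)), MvPowerSeries.coeff c F *
          MvPowerSeries.coeff e (subst2 a b (u ^ (c 0) * v ^ (c 1))) := by
    rw [coeff_subst2_eq_coeff_Phi hA hB F (by omega : M ≤ 2*M), coeff_Phi]
    refine Finset.sum_congr rfl fun c _ => ?_
    rw [subst2_mul ha hb, subst2_pow ha hb, subst2_pow ha hb]
  have hLHS : MvPowerSeries.coeff e (subst2 a b (subst2 u v F))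
      = ∑ d ∈ Finset.Iic (s M M),
          (∑ c ∈ Finset.Iic (s (2*M) (2*M)), MvPowerSeries.coeff c F *
            MvPowerSeries.coeff d (u ^ (c 0) * v ^ (c 1))) *
          MvPowerSeries.coeff e (a ^ (d 0) * b ^ (d 1)) := by
    rw [coeff_subst2_eq_coeff_Phi ha hb _ (le_refl M), coeff_Phi]
    refine Finset.sum_congr rfl fun d hd => ?_
    congr 1
    rw [Finset.mem_Iic] at hd
    have h0 : d 0 ≤ M := by simpa using hd 0
    have h1 : d 1 ≤ M := by simpa using hd 1
    have hdm : mdeg d ≤ 2*M := by rw [mdeg_eq_d0_add_d1]; omega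
    rw [coeff_subst2_eq_coeff_Phi hu hv F hdm, coeff_Phi]
  rw [hLHS, hRHS]
  have expand : ∀ c : Fin 2 →₀ ℕ,
      MvPowerSeries.coeff e (subst2 a b (u ^ (c 0) * v ^ (c 1)))
        = ∑ d ∈ Finset.Iic (s M M), MvPowerSeries.coeff d (u ^ (c 0) * v ^ (c 1)) *
            MvPowerSeries.coeff e (a ^ (d 0) * b ^ (d 1)) := fun c => by
    rw [coeff_subst2_eq_coeff_Phi ha hb _ (le_refl M), coeff_Phi]
  simp_rw [expand, Finset.mul_sum, Finset.sum_mul]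
  rw [Finset.sum_comm]
  exact Finset.sum_congr rfl fun c _ => Finset.sum_congr rfl fun d _ => by ring

lemma subst2_prod (ha : MvPowerSeries.constantCoeff (σ := tau) (R := R) a = 0)
    (hb : MvPowerSeries.constantCoeff (σ := tau) (R := R) b = 0)
    {ι : Type*} (t : Finset ι) (F : ι → MvPowerSeries (Fin 2) R) :
    subst2 a b (∏ i ∈ t, F i) = ∏ i ∈ t, subst2 a b (F i) := by
  classical
  induction t using Finset.induction_on with
  | empty => simpa using subst2_one ha hb
  | insert _ _ hnotmem ih =>
    rw [Finset.prod_insert hnotmem, Finset.prod_insert hnotmem, subst2_mul ha hb, ih]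

end Lubin


open Lubin in
theorem lubin_product_symmetry (p q : ℕ) (hp : p.Prime) (hq : ∃ r : ℕ, 0 < r ∧ q = p ^ r)
    (R : Type*) [CommRing R] [IsDomain R]
    (ζ : R) (hζ : orderOf ζ = q - 1)
    (F : MvPowerSeries (Fin 2) R)
    (hX : subst2 (MvPowerSeries.X 0 : MvPowerSeries (Fin 2) R) 0 F = MvPowerSeries.X 0)
    (hY : subst2 (0 : MvPowerSeries (Fin 2) R) (MvPowerSeries.X 1) F = MvPowerSeries.X 1)
    (hcomm : subst2 (MvPowerSeries.X 1 : MvPowerSeries (Fin 2) R) (MvPowerSeries.X 0) F = F)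
    (hassoc :
      subst2 (subst2 (MvPowerSeries.X 0 : MvPowerSeries (Fin 3) R) (MvPowerSeries.X 1) F)
          (MvPowerSeries.X 2) F =
        subst2 (MvPowerSeries.X 0 : MvPowerSeries (Fin 3) R)
          (subst2 (MvPowerSeries.X 1 : MvPowerSeries (Fin 3) R) (MvPowerSeries.X 2) F) F)
    (hζend : subst2 (MvPowerSeries.C (σ := (Fin 2)) (R := R) ζ * MvPowerSeries.X 0)
        (MvPowerSeries.C (σ := (Fin 2)) (R := R) ζ * MvPowerSeries.X 1) F = MvPowerSeries.C (σ := (Fin 2)) (R := R) ζ * F) :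
    subst2 (MvPowerSeries.X 0 : MvPowerSeries (Fin 2) R) 0
      (∏ i ∈ Finset.Icc 1 (q-1),
        subst2 (MvPowerSeries.X 0 : MvPowerSeries (Fin 2) R)
          (MvPowerSeries.C (σ := (Fin 2)) (R := R) (ζ^i) * MvPowerSeries.X 1) F)
      = (MvPowerSeries.X 0) ^ (q-1) ∧
    (Odd q →
      subst2 (MvPowerSeries.X 1 : MvPowerSeries (Fin 2) R) (MvPowerSeries.X 0)
        (∏ i ∈ Finset.Icc 1 (q-1),
          subst2 (MvPowerSeries.X 0 : MvPowerSeries (Fin 2) R)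
            (MvPowerSeries.C (σ := (Fin 2)) (R := R) (ζ^i) * MvPowerSeries.X 1) F)
        = -(∏ i ∈ Finset.Icc 1 (q-1),
            subst2 (MvPowerSeries.X 0 : MvPowerSeries (Fin 2) R)
              (MvPowerSeries.C (σ := (Fin 2)) (R := R) (ζ^i) * MvPowerSeries.X 1) F)) := by
  classical
  set X0 : MvPowerSeries (Fin 2) R := MvPowerSeries.X 0 with hX0def
  set X1 : MvPowerSeries (Fin 2) R := MvPowerSeries.X 1 with hX1def
  have hX0c : MvPowerSeries.constantCoeff (σ := (Fin 2)) (R := R) X0 = 0 := MvPowerSeries.constantCoeff_X 0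
  have hX1c : MvPowerSeries.constantCoeff (σ := (Fin 2)) (R := R) X1 = 0 := MvPowerSeries.constantCoeff_X 1
  have h0c : MvPowerSeries.constantCoeff (σ := (Fin 2)) (R := R) 0 = 0 := map_zero _
  have hCXc : ∀ (c : R) (i : Fin 2), MvPowerSeries.constantCoeff (σ := (Fin 2)) (R := R)
      (MvPowerSeries.C (σ := (Fin 2)) (R := R) c * MvPowerSeries.X i) = 0 := by
    intro c i
    rw [map_mul, MvPowerSeries.constantCoeff_X, mul_zero]
  have hCmulc : ∀ (c : R) (w : MvPowerSeries (Fin 2) R),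
      MvPowerSeries.constantCoeff (σ := (Fin 2)) (R := R) w = 0 →
      MvPowerSeries.constantCoeff (σ := (Fin 2)) (R := R) (MvPowerSeries.C (σ := (Fin 2)) (R := R) c * w) = 0 := by
    intro c w hw
    rw [map_mul, hw, mul_zero]
  -- q basics
  obtain ⟨r, hr, hqpr⟩ := hq
  have hq2 : 2 ≤ q := by
    rw [hqpr]
    exact Nat.one_lt_pow (by omega) hp.one_lt
  set n := q - 1 with hn
  have hn1 : 1 ≤ n := by omega
  have hzq : ζ ^ n = 1 := by rw [← hζ]; exact pow_orderOf_eq_one ζ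
  -- abbreviation for the factors
  set f : ℕ → MvPowerSeries (Fin 2) R := fun j =>
    subst2 X0 (MvPowerSeries.C (σ := (Fin 2)) (R := R) (ζ^j) * X1) F with hfdef
  -- single-step equivariance
  have step : ∀ (a b : MvPowerSeries (Fin 2) R),
      MvPowerSeries.constantCoeff (σ := (Fin 2)) (R := R) a = 0 →
      MvPowerSeries.constantCoeff (σ := (Fin 2)) (R := R) b = 0 →
      subst2 (MvPowerSeries.C (σ := (Fin 2)) (R := R) ζ * a) (MvPowerSeries.C (σ := (Fin 2)) (R := R) ζ * b) F
        = MvPowerSeries.C (σ := (Fin 2)) (R := R) ζ * subst2 a b F := by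
    intro a b ha hb
    have h := congrArg (subst2 a b) hζend
    rw [subst2_comp ha hb (hCXc ζ 0) (hCXc ζ 1)] at h
    rw [subst2_mul ha hb, subst2_C ha hb, subst2_X0 ha hb,
      subst2_mul ha hb, subst2_C ha hb, subst2_X1 ha hb] at h
    rwa [subst2_mul ha hb, subst2_C ha hb] at h
  -- iterated equivariance
  have equi : ∀ (k : ℕ) (a b : MvPowerSeries (Fin 2) R),
      MvPowerSeries.constantCoeff (σ := (Fin 2)) (R := R) a = 0 →
      MvPowerSeries.constantCoeff (σ := (Fin 2)) (R := R) b = 0 →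
      subst2 (MvPowerSeries.C (σ := (Fin 2)) (R := R) (ζ^k) * a) (MvPowerSeries.C (σ := (Fin 2)) (R := R) (ζ^k) * b) F
        = MvPowerSeries.C (σ := (Fin 2)) (R := R) (ζ^k) * subst2 a b F := by
    intro k
    induction k with
    | zero => intro a b ha hb; simp
    | succ m ih =>
      intro a b ha hb
      have hps : (ζ : R) ^ (m+1) = ζ * ζ ^ m := by rw [pow_succ, mul_comm]
      rw [hps, map_mul, mul_assoc, mul_assoc, step _ _ (hCmulc _ a ha) (hCmulc _ b hb),
        ih a b ha hb, mul_assoc]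
  constructor
  · -- first goal
    rw [subst2_prod hX0c h0c]
    have heach : ∀ i ∈ Finset.Icc 1 n, subst2 X0 0 (f i) = X0 := by
      intro i _
      rw [hfdef]
      rw [subst2_comp hX0c h0c hX0c (hCXc (ζ^i) 1)]
      rw [subst2_X0 hX0c h0c, subst2_mul hX0c h0c, subst2_C hX0c h0c, subst2_X1 hX0c h0c,
        mul_zero, hX]
    rw [Finset.prod_congr rfl heach, Finset.prod_const, Nat.card_Icc]
    congr 1
  · -- second goal
    intro hodd
    have hq3 : 3 ≤ q := by
      rcases hodd with ⟨t, ht⟩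
      omega
    have hn2 : 2 ≤ n := by omega
    -- swap of each factor
    have key : ∀ i ∈ Finset.Icc 1 n, subst2 X1 X0 (f i)
        = MvPowerSeries.C (σ := (Fin 2)) (R := R) (ζ^i) * f (n - i) := by
      intro i hi
      rw [Finset.mem_Icc] at hi
      rw [hfdef]
      simp only
      rw [subst2_comp hX1c hX0c hX0c (hCXc (ζ^i) 1)]
      rw [subst2_X0 hX1c hX0c, subst2_mul hX1c hX0c, subst2_C hX1c hX0c, subst2_X1 hX1c hX0c]
      -- now : subst2 X1 (C (ζ^i) * X0) F
      have hmulz : (ζ : R)^i * ζ^(n - i) = 1 := by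
        rw [← pow_add]
        have : i + (n - i) = n := by omega
        rw [this, hzq]
      have hXrw : X1 = MvPowerSeries.C (σ := (Fin 2)) (R := R) (ζ^i) *
          (MvPowerSeries.C (σ := (Fin 2)) (R := R) (ζ^(n-i)) * X1) := by
        rw [← mul_assoc, ← map_mul, hmulz, map_one, one_mul]
      conv_lhs => rw [hXrw]
      rw [equi i _ _ (hCmulc _ X1 hX1c) hX0c]
      congr 1
      -- commutativity step
      have h := congrArg (subst2 X0 (MvPowerSeries.C (σ := (Fin 2)) (R := R) (ζ^(n-i)) * X1)) hcomm
      rw [subst2_comp hX0c (hCXc (ζ^(n-i)) 1) hX1c hX0c] at h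
      rw [subst2_X1 hX0c (hCXc (ζ^(n-i)) 1), subst2_X0 hX0c (hCXc (ζ^(n-i)) 1)] at h
      exact h
    rw [subst2_prod hX1c hX0c, Finset.prod_congr rfl key, Finset.prod_mul_distrib]
    -- the constant part
    have hconst : ∏ i ∈ Finset.Icc 1 n, MvPowerSeries.C (σ := (Fin 2)) (R := R) (ζ^i)
        = MvPowerSeries.C (σ := (Fin 2)) (R := R) (ζ ^ (∑ i ∈ Finset.Icc 1 n, i)) := by
      rw [← map_prod, Finset.prod_pow_eq_pow_sum]
    have hgauss : (∑ i ∈ Finset.Icc 1 n, i) * 2 = (n + 1) * n := by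
      have hset : Finset.range (n+1) = insert 0 (Finset.Icc 1 n) := by
        ext x; simp only [Finset.mem_range, Finset.mem_insert, Finset.mem_Icc]; omega
      have := Finset.sum_range_id_mul_two (n+1)
      rw [hset, Finset.sum_insert (by simp)] at this
      simpa using this
    set S := ∑ i ∈ Finset.Icc 1 n, i with hS
    have hzS : ζ ^ S = -1 := by
      have hsq : ζ ^ S * ζ ^ S = 1 := by
        rw [← pow_add]
        have : S + S = (n + 1) * n := by omega
        rw [this, pow_mul', hzq, one_pow]
      rcases mul_self_eq_one_iff.1 hsq with h1 | h1
      · exfalso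
        have hdvd : n ∣ S := hζ ▸ orderOf_dvd_of_pow_eq_one h1
        obtain ⟨k, hk⟩ := hdvd
        have h2 : n * (2 * k) = n * (n + 1) := by
          rw [show n * (n+1) = (n+1) * n by ring, ← hgauss, hk]; ring
        have h3 : 2 * k = n + 1 := Nat.eq_of_mul_eq_mul_left (by omega) h2
        have : ¬ Odd q := by
          rw [Nat.not_odd_iff_even]
          exact ⟨k, by omega⟩
        exact this hodd
      · exact h1
    rw [hconst, hzS]
    -- the product part: reindexing
    have hprodre : ∏ i ∈ Finset.Icc 1 n, f (n - i) = ∏ j ∈ Finset.Icc 1 n, f j := by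
      have step1 : ∏ i ∈ Finset.Icc 1 n, f (n - i) = ∏ j ∈ Finset.Icc 0 (n-1), f j := by
        refine Finset.prod_nbij' (fun i => n - i) (fun j => n - j) ?_ ?_ ?_ ?_ ?_
        · intro i hi; rw [Finset.mem_Icc] at hi ⊢; omega
        · intro j hj; rw [Finset.mem_Icc] at hj ⊢; omega
        · intro i hi; rw [Finset.mem_Icc] at hi; omega
        · intro j hj; rw [Finset.mem_Icc] at hj; omega
        · intro i _; rfl
      have hf0 : f 0 = f n := by
        rw [hfdef]; simp only
        rw [pow_zero, hzq]
      have hsplit0 : Finset.Icc 0 (n-1) = insert 0 (Finset.Icc 1 (n-1)) := by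
        ext x; simp only [Finset.mem_Icc, Finset.mem_insert]; omega
      have hsplitn : Finset.Icc 1 n = insert n (Finset.Icc 1 (n-1)) := by
        ext x; simp only [Finset.mem_Icc, Finset.mem_insert]; omega
      rw [step1, hsplit0, Finset.prod_insert (by simp), hf0]
      conv_rhs => rw [hsplitn]
      rw [Finset.prod_insert (by rw [Finset.mem_Icc]; omega)]
    rw [hprodre]
    have hCneg : MvPowerSeries.C (σ := (Fin 2)) (R := R) (-1) = -1 := by
      rw [map_neg, map_one]
    rw [hCneg, neg_one_mul]
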